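/- Let g = sl₃ (type A₂) and λ a dominant integral weight with λ₁ = ⟨λ, h₁⟩, λ₂ = ⟨λ, h₂⟩. The number of triples (a, b, c) ∈ ℤ³ with b ≥ c ≥ 0, a ≥ 0, λ₁ ≥ a, λ₂ ≥ b − a, λ₂ ≥ c equals the Weyl dimension formula value dim V(λ) = (λ₁+1)(λ₂+1)(λ₁+λ₂+2)/2. -/

import Mathlib

open Finset

lemma Icc_int_eq_image (n : ℕ) :
    Finset.Icc (0:ℤ) (n:ℤ) = (Finset.range (n+1)).image (fun i : ℕ => (i:ℤ)) := by
  ext x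
  simp only [Finset.mem_Icc, Finset.mem_image, Finset.mem_range]
  constructor
  · rintro ⟨h0, hn⟩
    exact ⟨x.toNat, by omega, by omega⟩
  · rintro ⟨i, hi, rfl⟩
    omega

lemma sum_Icc_int_eq_range (n : ℕ) (f : ℤ → ℕ) :
    ∑ x ∈ Finset.Icc (0:ℤ) (n:ℤ), f x = ∑ i ∈ Finset.range (n+1), f i := by
  rw [Icc_int_eq_image, Finset.sum_image]
  intro a _ b _ h
  exact Nat.cast_injective h

theorem A2_lattice_count (lam1 lam2 : ℕ) :
    Set.ncard {t : ℤ × ℤ × ℤ |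
      t.2.2 ≤ t.2.1 ∧ 0 ≤ t.2.2 ∧ 0 ≤ t.1 ∧
      t.1 ≤ (lam1 : ℤ) ∧ t.2.1 - t.1 ≤ (lam2 : ℤ) ∧ t.2.2 ≤ (lam2 : ℤ)} =
    (lam1 + 1) * (lam2 + 1) * (lam1 + lam2 + 2) / 2 := by
  classical
  set F : Finset (ℤ × ℤ × ℤ) :=
    (Finset.Icc (0:ℤ) lam1 ×ˢ Finset.Icc (0:ℤ) (lam1 + lam2) ×ˢ Finset.Icc (0:ℤ) lam2).filter
      (fun t => t.2.2 ≤ t.2.1 ∧ 0 ≤ t.2.2 ∧ 0 ≤ t.1 ∧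
        t.1 ≤ (lam1 : ℤ) ∧ t.2.1 - t.1 ≤ (lam2 : ℤ) ∧ t.2.2 ≤ (lam2 : ℤ)) with hF
  have hset : {t : ℤ × ℤ × ℤ |
      t.2.2 ≤ t.2.1 ∧ 0 ≤ t.2.2 ∧ 0 ≤ t.1 ∧
      t.1 ≤ (lam1 : ℤ) ∧ t.2.1 - t.1 ≤ (lam2 : ℤ) ∧ t.2.2 ≤ (lam2 : ℤ)} = ↑F := by
    ext ⟨a, b, c⟩
    simp only [Set.mem_setOf_eq, hF, Finset.coe_filter, Finset.mem_product, Finset.mem_Icc,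
      Set.mem_setOf_eq]
    omega
  rw [hset, Set.ncard_coe_finset]
  have hcard : F.card =
      ∑ a ∈ Finset.Icc (0:ℤ) lam1, ∑ c ∈ Finset.Icc (0:ℤ) lam2,
        ∑ b ∈ Finset.Icc (0:ℤ) (lam1 + lam2),
          if (c ≤ b ∧ 0 ≤ c ∧ 0 ≤ a ∧ a ≤ (lam1:ℤ) ∧ b - a ≤ (lam2:ℤ) ∧ c ≤ (lam2:ℤ))
          then 1 else 0 := by
    rw [hF, Finset.card_filter, Finset.sum_product]
    refine Finset.sum_congr rfl fun a _ => ?_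
    rw [Finset.sum_product]
    exact Finset.sum_comm
  have hinner : ∀ a ∈ Finset.Icc (0:ℤ) (lam1:ℤ), ∀ c ∈ Finset.Icc (0:ℤ) (lam2:ℤ),
      (∑ b ∈ Finset.Icc (0:ℤ) (lam1 + lam2),
          if (c ≤ b ∧ 0 ≤ c ∧ 0 ≤ a ∧ a ≤ (lam1:ℤ) ∧ b - a ≤ (lam2:ℤ) ∧ c ≤ (lam2:ℤ))
          then 1 else 0) = (a + lam2 - c + 1).toNat := by
    intro a ha c hc
    simp only [Finset.mem_Icc] at ha hc
    rw [← Finset.sum_filter]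
    have hfil : (Finset.Icc (0:ℤ) (lam1 + lam2)).filter
        (fun b => c ≤ b ∧ 0 ≤ c ∧ 0 ≤ a ∧ a ≤ (lam1:ℤ) ∧ b - a ≤ (lam2:ℤ) ∧ c ≤ (lam2:ℤ))
        = Finset.Icc c (a + lam2) := by
      ext b
      simp only [Finset.mem_filter, Finset.mem_Icc]
      omega
    rw [hfil, Finset.sum_const, smul_eq_mul, mul_one, Int.card_Icc]
    congr 1; omega
  rw [hcard, Finset.sum_congr rfl (fun a ha => Finset.sum_congr rfl (fun c hc => hinner a ha c hc))]
  rw [sum_Icc_int_eq_range lam1]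
  have hcast : ∀ a ∈ Finset.range (lam1+1),
      (∑ c ∈ Finset.Icc (0:ℤ) (lam2:ℤ), ((a:ℤ) + lam2 - c + 1).toNat)
      = ∑ c ∈ Finset.range (lam2+1), (a + lam2 + 1 - c) := by
    intro a _
    rw [sum_Icc_int_eq_range lam2]
    refine Finset.sum_congr rfl fun c hc => ?_
    simp only [Finset.mem_range] at hc
    omega
  rw [Finset.sum_congr rfl hcast]
  have key : ∀ a, ∑ c ∈ Finset.range (lam2+1), (a + lam2 + 1 - c)
      = (lam2+1) * (a+1) + ∑ c ∈ Finset.range (lam2+1), c := by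
    intro a
    rw [← Finset.sum_range_reflect]
    have hre : ∀ c ∈ Finset.range (lam2+1), (a + lam2 + 1 - (lam2 + 1 - 1 - c)) = (a + 1) + c := by
      intro c hc; simp only [Finset.mem_range] at hc; omega
    rw [Finset.sum_congr rfl hre, Finset.sum_add_distrib, Finset.sum_const, Finset.card_range,
      smul_eq_mul, mul_comm]
  rw [Finset.sum_congr rfl (fun a _ => key a), Finset.sum_add_distrib, Finset.sum_const,
    Finset.card_range, smul_eq_mul, ← Finset.mul_sum]
  have h1 : ∑ a ∈ Finset.range (lam1+1), (a+1) = (∑ a ∈ Finset.range (lam1+1), a) + (lam1+1) := by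
    rw [Finset.sum_add_distrib, Finset.sum_const, Finset.card_range, smul_eq_mul, mul_one]
  rw [h1]
  set S1 := ∑ a ∈ Finset.range (lam1+1), a with hS1
  set S2 := ∑ c ∈ Finset.range (lam2+1), c with hS2
  have e1 : 2 * S1 = (lam1+1) * lam1 := by
    have h := Finset.sum_range_id_mul_two (lam1+1)
    simp only [Nat.add_sub_cancel] at h
    rw [hS1]; omega
  have e2 : 2 * S2 = (lam2+1) * lam2 := by
    have h := Finset.sum_range_id_mul_two (lam2+1)
    simp only [Nat.add_sub_cancel] at h
    rw [hS2]; omega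
  have hfinal : 2 * ((lam2+1) * (S1 + (lam1+1)) + (lam1+1) * S2)
      = (lam1 + 1) * (lam2 + 1) * (lam1 + lam2 + 2) := by
    calc 2 * ((lam2+1) * (S1 + (lam1+1)) + (lam1+1) * S2)
        = (lam2+1) * (2 * S1) + 2 * (lam2+1) * (lam1+1) + (lam1+1) * (2 * S2) := by ring
      _ = (lam2+1) * ((lam1+1) * lam1) + 2 * (lam2+1) * (lam1+1)
            + (lam1+1) * ((lam2+1) * lam2) := by rw [e1, e2]
      _ = (lam1 + 1) * (lam2 + 1) * (lam1 + lam2 + 2) := by ring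
  omega
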